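/- In SU_q(2), the elements g⁺₁ = α + sβ satisfy: Δ(α + sβ) ≡ (α+sβ) ⊗ (α+sβ) modulo SU_q(2) ⊗ J_s, where J_s = {ξ - s, η + s, ζ}·SU_q(2); equivalently, the image of α + sβ in the quotient coalgebra C_s = SU_q(2)/J_s is a group-like element. -/
import Mathlib


open scoped TensorProduct

/-- ξ = s(α² - q⁻¹β²) + (s²-1)q⁻¹αβ -/
def xiE {k A : Type*} [Field k] [Ring A] [Algebra k A] (q s : k) (α β : A) : A :=
  s • (α^2) - (s*q⁻¹) • (β^2) + ((s^2-1)*q⁻¹) • (α*β)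

/-- η = s(qγ² - δ²) + (s²-1)γδ -/
def etaE {k A : Type*} [Field k] [Ring A] [Algebra k A] (q s : k) (γ δ : A) : A :=
  (s*q) • (γ^2) - s • (δ^2) + (s^2-1) • (γ*δ)

/-- ζ = s(qαγ - βδ) + (s²-1)qβγ -/
def zetaE {k A : Type*} [Field k] [Ring A] [Algebra k A] (q s : k) (α β γ δ : A) : A :=
  (s*q) • (α*γ) - s • (β*δ) + ((s^2-1)*q) • (β*γ)

/-- The projector e_s = (1/(1+s²)) [[1-ζ, ξ],[-η, s²+q⁻²ζ]] -/
def esMat {k A : Type*} [Field k] [Ring A] [Algebra k A] (q s : k) (α β γ δ : A) :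
    Matrix (Fin 2) (Fin 2) A :=
  (1+s^2)⁻¹ • !![1 - zetaE q s α β γ δ, xiE q s α β;
                 -etaE q s γ δ, (s^2) • (1:A) + (q^2)⁻¹ • zetaE q s α β γ δ]

/-- The right ideal J_s = {ξ-s, η+s, ζ}·SU_q(2) -/
def Jideal {k A : Type*} [Field k] [Ring A] [Algebra k A] (q s : k) (α β γ δ : A) : Set A :=
  {z | ∃ p₁ p₂ p₃ : A, z = (xiE q s α β - s • 1) * p₁ + (etaE q s γ δ + s • 1) * p₂ +
      zetaE q s α β γ δ * p₃}

theorem stmt8 {k A : Type*} [Field k] [Ring A] [Algebra k A]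
    (q s : k) (α β γ δ : A)
    (h1 : α*β = q • (β*α)) (h2 : α*γ = q • (γ*α)) (h3 : β*γ = γ*β)
    (h4 : β*δ = q • (δ*β)) (h5 : γ*δ = q • (δ*γ))
    (h6 : α*δ = δ*α + (q - q⁻¹) • (β*γ)) (h7 : α*δ - q • (β*γ) = 1)
    (hq : q ≠ 0) (Δ : A →ₐ[k] A ⊗[k] A)
    (hΔα : Δ α = α ⊗ₜ[k] α + β ⊗ₜ[k] γ) (hΔβ : Δ β = α ⊗ₜ[k] β + β ⊗ₜ[k] δ)
    (hΔγ : Δ γ = γ ⊗ₜ[k] α + δ ⊗ₜ[k] γ) (hΔδ : Δ δ = γ ⊗ₜ[k] β + δ ⊗ₜ[k] δ) :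
    Δ (α + s • β) - (α + s • β) ⊗ₜ[k] (α + s • β) ∈ Submodule.span k {x : A ⊗[k] A | ∃ p z : A, z ∈ Jideal q s α β γ δ ∧ x = p ⊗ₜ[k] z} := by
  -- commutation lemmas in normal-form orientation
  have hβα : β*α = q⁻¹ • (α*β) := by
    rw [h1, smul_smul, inv_mul_cancel₀ hq, one_smul]
  have hγα : γ*α = q⁻¹ • (α*γ) := by
    rw [h2, smul_smul, inv_mul_cancel₀ hq, one_smul]
  have hδβ : δ*β = q⁻¹ • (β*δ) := by
    rw [h4, smul_smul, inv_mul_cancel₀ hq, one_smul]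
  have hδγ : δ*γ = q⁻¹ • (γ*δ) := by
    rw [h5, smul_smul, inv_mul_cancel₀ hq, one_smul]
  have hαδ : α*δ = 1 + q • (β*γ) := by
    rw [← h7]; abel
  have hδα : δ*α = 1 + q⁻¹ • (β*γ) := by
    have h : δ*α = α*δ - (q - q⁻¹) • (β*γ) := by rw [h6]; abel
    rw [h, hαδ]
    match_scalars <;> ring
  -- "cons" versions for rewriting inside right-associated words
  have hβα' : ∀ x : A, β*(α*x) = q⁻¹ • (α*(β*x)) := fun x => by
    rw [← mul_assoc, hβα, smul_mul_assoc, mul_assoc]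
  have hγα' : ∀ x : A, γ*(α*x) = q⁻¹ • (α*(γ*x)) := fun x => by
    rw [← mul_assoc, hγα, smul_mul_assoc, mul_assoc]
  have hγβ' : ∀ x : A, γ*(β*x) = β*(γ*x) := fun x => by
    rw [← mul_assoc, ← h3, mul_assoc]
  have hδβ' : ∀ x : A, δ*(β*x) = q⁻¹ • (β*(δ*x)) := fun x => by
    rw [← mul_assoc, hδβ, smul_mul_assoc, mul_assoc]
  have hδγ' : ∀ x : A, δ*(γ*x) = q⁻¹ • (γ*(δ*x)) := fun x => by
    rw [← mul_assoc, hδγ, smul_mul_assoc, mul_assoc]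
  have hδα' : ∀ x : A, δ*(α*x) = x + q⁻¹ • (β*(γ*x)) := fun x => by
    rw [← mul_assoc, hδα, add_mul, one_mul, smul_mul_assoc, mul_assoc]
  -- the key algebra identity
  set zJ : A := (xiE q s α β - s • 1) * (-(s • γ)) + (etaE q s γ δ + s • 1) * (-α) +
      zetaE q s α β γ δ * (s • α + (q⁻¹*q⁻¹) • γ) with hzJ
  have hzm : zJ ∈ Jideal q s α β γ δ := ⟨_, _, _, rfl⟩
  have key : zJ = γ + s • δ - s • α - (s*s) • β := by
    rw [hzJ]
    simp only [xiE, etaE, zetaE, pow_two, mul_add, add_mul, mul_sub, sub_mul,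
      smul_mul_assoc, mul_smul_comm, mul_one, one_mul, mul_neg, neg_mul, mul_assoc,
      hγα, hβα, hδα, hδβ, hδγ, hβα', hγα', hγβ', hδβ', hδγ', hδα', smul_add, smul_smul,
      smul_sub, neg_smul, smul_neg]
    match_scalars <;> field_simp <;> ring
  -- the tensor computation
  have hten : Δ (α + s • β) - (α + s • β) ⊗ₜ[k] (α + s • β) = β ⊗ₜ[k] zJ := by
    rw [key, map_add, map_smul, hΔα, hΔβ]
    simp only [TensorProduct.tmul_add, TensorProduct.add_tmul, TensorProduct.tmul_sub,
      TensorProduct.sub_tmul, TensorProduct.tmul_smul, TensorProduct.smul_tmul', smul_add,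
      smul_smul]
    module
  rw [hten]
  exact Submodule.subset_span ⟨β, zJ, hzm, rfl⟩
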